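/- Suppose f, ξ, η, ζ are C¹ on an open set D ⊆ ℝ², and suppose that for every C¹ curve c : [a,b] → D with nonvanishing velocity the length function t ↦ ∫_a^b ‖γ'(s) + t (v∘c)'(s)‖ ds, where γ(s) = (c₁(s), c₂(s), f(c(s))) and v = (ξ, η, ζ), has derivative 0 at t = 0. Then at every point of D the equations x_u·v_u = 0, x_u·v_v + x_v·v_u = 0, and x_v·v_v = 0 hold, i.e. ξ_u = −f_u ζ_u, ξ_v + η_u = −f_v ζ_u − f_u ζ_v, and η_v = −f_v ζ_v on D. -/

import Mathlib

noncomputable section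
open scoped RealInnerProductSpace
open Set

/-- ℝ³ with the Euclidean norm and scalar product. -/
abbrev E3 := EuclideanSpace ℝ (Fin 3)

/-- The vector (a, b, c) ∈ ℝ³. -/
def vec3 (a b c : ℝ) : E3 := (WithLp.equiv 2 (Fin 3 → ℝ)).symm ![a, b, c]

/-- The cross product in ℝ³. -/
def cross3 (x y : E3) : E3 :=
  vec3 (x 1 * y 2 - x 2 * y 1) (x 2 * y 0 - x 0 * y 2) (x 0 * y 1 - x 1 * y 0)

/-- Partial derivative in the first variable `u`. -/
def pu {F : Type*} [NormedAddCommGroup F] [NormedSpace ℝ F] (g : ℝ × ℝ → F) (z : ℝ × ℝ) : F :=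
  fderiv ℝ g z (1, 0)

/-- Partial derivative in the second variable `v`. -/
def pv {F : Type*} [NormedAddCommGroup F] [NormedSpace ℝ F] (g : ℝ × ℝ → F) (z : ℝ × ℝ) : F :=
  fderiv ℝ g z (0, 1)

/-- The infinitesimal-flex equations (3): ξ_u = −f_u ζ_u,
ξ_v + η_u = −f_v ζ_u − f_u ζ_v, η_v = −f_v ζ_v. -/
def FlexEqns (f ξ η ζ : ℝ × ℝ → ℝ) (z : ℝ × ℝ) : Prop :=
  pu ξ z = -(pu f z * pu ζ z) ∧
  pv ξ z + pu η z = -(pv f z * pu ζ z) - pu f z * pv ζ z ∧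
  pv η z = -(pv f z * pv ζ z)

lemma vec3_eq_sum (a b c : ℝ) :
    vec3 a b c = a • vec3 1 0 0 + b • vec3 0 1 0 + c • vec3 0 0 1 := by
  ext i
  fin_cases i <;> simp [vec3]

lemma inner_vec3 (a b c d e f : ℝ) : ⟪vec3 a b c, vec3 d e f⟫ = a * d + b * e + c * f := by
  simp [vec3, EuclideanSpace.inner_eq_star_dotProduct, Fin.sum_univ_three]
  ring

lemma hasDerivAt_vec3 {g1 g2 g3 : ℝ → ℝ} {g1' g2' g3' : ℝ} {s : ℝ}
    (h1 : HasDerivAt g1 g1' s) (h2 : HasDerivAt g2 g2' s) (h3 : HasDerivAt g3 g3' s) :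
    HasDerivAt (fun s => vec3 (g1 s) (g2 s) (g3 s)) (vec3 g1' g2' g3') s := by
  have key : ∀ (v : E3) {g : ℝ → ℝ} {g' : ℝ}, HasDerivAt g g' s →
      HasDerivAt (fun s => g s • v) (g' • v) s := fun v {g g'} h => h.smul_const v
  rw [show (fun s => vec3 (g1 s) (g2 s) (g3 s)) = ((fun s => g1 s • vec3 1 0 0) + (fun s => g2 s • vec3 0 1 0)) + (fun s => g3 s • vec3 0 0 1) from funext fun x => vec3_eq_sum _ _ _, vec3_eq_sum g1' g2' g3']
  exact ((key (vec3 1 0 0) h1).add (key (vec3 0 1 0) h2)).add (key (vec3 0 0 1) h3)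

lemma continuousOn_vec3 {α : Type*} [TopologicalSpace α] {g1 g2 g3 : α → ℝ} {s : Set α}
    (h1 : ContinuousOn g1 s) (h2 : ContinuousOn g2 s) (h3 : ContinuousOn g3 s) :
    ContinuousOn (fun x => vec3 (g1 x) (g2 x) (g3 x)) s := by
  convert ((h1.smul (continuousOn_const (c := vec3 1 0 0))).add (h2.smul (continuousOn_const (c := vec3 0 1 0)))).add
    (h3.smul (continuousOn_const (c := vec3 0 0 1))) using 1
  funext x
  exact vec3_eq_sum _ _ _

lemma vec3_ne_zero {a b c : ℝ} (h : a ≠ 0 ∨ b ≠ 0) : vec3 a b c ≠ 0 := by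
  intro h0
  rcases h with h | h
  · exact h (by rw [show a = vec3 a b c 0 from by simp [vec3], h0]; rfl)
  · exact h (by rw [show b = vec3 a b c 1 from by simp [vec3], h0]; rfl)


private theorem stmt2_key (D : Set (ℝ × ℝ)) (hD : IsOpen D)
    (f ξ η ζ : ℝ × ℝ → ℝ)
    (hf : ContDiffOn ℝ 1 f D) (hξ : ContDiffOn ℝ 1 ξ D)
    (hη : ContDiffOn ℝ 1 η D) (hζ : ContDiffOn ℝ 1 ζ D)
    (hstat : ∀ a b : ℝ, a < b → ∀ c : ℝ → ℝ × ℝ,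
      ContDiffOn ℝ 1 c (Set.Icc a b) →
      (∀ s ∈ Set.Icc a b, c s ∈ D) →
      (∀ s ∈ Set.Icc a b,
        derivWithin (fun s => vec3 (c s).1 (c s).2 (f (c s))) (Set.Icc a b) s ≠ 0) →
      HasDerivAt (fun t : ℝ => ∫ s in a..b,
        ‖derivWithin (fun s => vec3 (c s).1 (c s).2 (f (c s))) (Set.Icc a b) s
          + t • derivWithin (fun s => vec3 (ξ (c s)) (η (c s)) (ζ (c s)))
              (Set.Icc a b) s‖) 0 0)
    (z : ℝ × ℝ) (hz : z ∈ D) (w : ℝ × ℝ) (hw : w.1 ≠ 0 ∨ w.2 ≠ 0) :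
    w.1 * fderiv ℝ ξ z w + w.2 * fderiv ℝ η z w + fderiv ℝ f z w * fderiv ℝ ζ z w = 0 := by
  -- differentiability at points of D
  have hdiff : ∀ (g : ℝ × ℝ → ℝ), ContDiffOn ℝ 1 g D → ∀ p ∈ D, DifferentiableAt ℝ g p :=
    fun g hg p hp => (hg.differentiableOn one_ne_zero).differentiableAt (hD.mem_nhds hp)
  -- the line through z in direction w
  set c : ℝ → ℝ × ℝ := fun s => z + s • w with hc_def
  have hc0 : c 0 = z := by simp [hc_def]
  have hcC : ContDiff ℝ 1 c := contDiff_const.add (contDiff_id.smul contDiff_const)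
  have hcd : ∀ s : ℝ, HasDerivAt c w s := by
    intro s
    have h1 : HasDerivAt (fun s : ℝ => s • w) ((1:ℝ) • w) s := (hasDerivAt_id s).smul_const w
    simpa [hc_def] using h1.const_add z
  obtain ⟨r, hr, hball⟩ := Metric.isOpen_iff.mp hD z hz
  set δ0 : ℝ := r / (2 * (‖w‖ + 1)) with hδ0_def
  have hnw : (0:ℝ) < ‖w‖ + 1 := by positivity
  have hδ0 : 0 < δ0 := by positivity
  have hmem : ∀ s ∈ Icc (-δ0) δ0, c s ∈ D := by
    intro s hs
    apply hball
    have : dist (c s) z = |s| * ‖w‖ := by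
      simp [hc_def, dist_eq_norm, norm_smul, abs_mul, Real.norm_eq_abs]
    rw [Metric.mem_ball, this]
    have habs : |s| ≤ δ0 := abs_le.mpr ⟨hs.1, hs.2⟩
    have h1 : |s| * ‖w‖ ≤ δ0 * ‖w‖ := by
      apply mul_le_mul_of_nonneg_right habs (norm_nonneg w)
    have h2 : δ0 * ‖w‖ < r := by
      rw [hδ0_def]
      rw [div_mul_eq_mul_div, div_lt_iff₀ (by positivity)]
      nlinarith [norm_nonneg w]
    linarith
  -- A and B: derivatives of γ and V along the line
  set A : ℝ → E3 := fun s => vec3 w.1 w.2 (fderiv ℝ f (c s) w) with hA_def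
  set B : ℝ → E3 := fun s =>
    vec3 (fderiv ℝ ξ (c s) w) (fderiv ℝ η (c s) w) (fderiv ℝ ζ (c s) w) with hB_def
  have hfst : ∀ s : ℝ, HasDerivAt (fun s => (c s).1) w.1 s := fun s =>
    ((ContinuousLinearMap.fst ℝ ℝ ℝ).hasFDerivAt.comp_hasDerivAt s (hcd s))
  have hsnd : ∀ s : ℝ, HasDerivAt (fun s => (c s).2) w.2 s := fun s =>
    ((ContinuousLinearMap.snd ℝ ℝ ℝ).hasFDerivAt.comp_hasDerivAt s (hcd s))
  have hcompd : ∀ (g : ℝ × ℝ → ℝ), ContDiffOn ℝ 1 g D → ∀ s : ℝ, c s ∈ D →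
      HasDerivAt (fun s => g (c s)) (fderiv ℝ g (c s) w) s := by
    intro g hg s hs
    exact ((hdiff g hg (c s) hs).hasFDerivAt).comp_hasDerivAt s (hcd s)
  have hA : ∀ s : ℝ, c s ∈ D →
      HasDerivAt (fun s => vec3 (c s).1 (c s).2 (f (c s))) (A s) s := fun s hs =>
    hasDerivAt_vec3 (hfst s) (hsnd s) (hcompd f hf s hs)
  have hB : ∀ s : ℝ, c s ∈ D →
      HasDerivAt (fun s => vec3 (ξ (c s)) (η (c s)) (ζ (c s))) (B s) s := fun s hs =>
    hasDerivAt_vec3 (hcompd ξ hξ s hs) (hcompd η hη s hs) (hcompd ζ hζ s hs)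
  have hAne : ∀ s : ℝ, A s ≠ 0 := fun s => vec3_ne_zero hw
  -- continuity of A, B on the base interval
  have hcont : ∀ (g : ℝ × ℝ → ℝ), ContDiffOn ℝ 1 g D →
      ContinuousOn (fun s => fderiv ℝ g (c s) w) (Icc (-δ0) δ0) := by
    intro g hg
    have h1 : ContinuousOn (fderiv ℝ g) D := hg.continuousOn_fderiv_of_isOpen hD le_rfl
    have h2 : ContinuousOn (fun s => fderiv ℝ g (c s)) (Icc (-δ0) δ0) :=
      h1.comp hcC.continuous.continuousOn hmem
    exact h2.clm_apply continuousOn_const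
  have hAc : ContinuousOn A (Icc (-δ0) δ0) :=
    continuousOn_vec3 continuousOn_const continuousOn_const (hcont f hf)
  have hBc : ContinuousOn B (Icc (-δ0) δ0) :=
    continuousOn_vec3 (hcont ξ hξ) (hcont η hη) (hcont ζ hζ)
  set g : ℝ → ℝ := fun s => ⟪A s, B s⟫ / ‖A s‖ with hg_def
  have hgc : ContinuousOn g (Icc (-δ0) δ0) :=
    (hAc.inner hBc).div hAc.norm (fun s _ => norm_ne_zero_iff.mpr (hAne s))
  -- for every small δ, the integral of g on [-δ, δ] vanishes
  have hint : ∀ δ : ℝ, 0 < δ → δ ≤ δ0 → (∫ s in (-δ)..δ, g s) = 0 := by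
    intro δ hδ hδδ0
    have hlt : -δ < δ := by linarith
    have hIccsub : Icc (-δ) δ ⊆ Icc (-δ0) δ0 := Icc_subset_Icc (by linarith) hδδ0
    have hmem' : ∀ s ∈ Icc (-δ) δ, c s ∈ D := fun s hs => hmem s (hIccsub hs)
    have hud : UniqueDiffOn ℝ (Icc (-δ) δ) := uniqueDiffOn_Icc hlt
    have hdA : ∀ s ∈ Icc (-δ) δ,
        derivWithin (fun s => vec3 (c s).1 (c s).2 (f (c s))) (Icc (-δ) δ) s = A s :=
      fun s hs => (hA s (hmem' s hs)).hasDerivWithinAt.derivWithin (hud s hs)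
    have hdB : ∀ s ∈ Icc (-δ) δ,
        derivWithin (fun s => vec3 (ξ (c s)) (η (c s)) (ζ (c s))) (Icc (-δ) δ) s = B s :=
      fun s hs => (hB s (hmem' s hs)).hasDerivWithinAt.derivWithin (hud s hs)
    have huIcc : uIcc (-δ) δ = Icc (-δ) δ := uIcc_of_le hlt.le
    have hF : HasDerivAt (fun t : ℝ => ∫ s in (-δ)..δ, ‖A s + t • B s‖) 0 0 := by
      have h0 := hstat (-δ) δ hlt c hcC.contDiffOn hmem'
        (fun s hs => by rw [hdA s hs]; exact hAne s)
      have heq : (fun t : ℝ => ∫ s in (-δ)..δ,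
          ‖derivWithin (fun s => vec3 (c s).1 (c s).2 (f (c s))) (Icc (-δ) δ) s
            + t • derivWithin (fun s => vec3 (ξ (c s)) (η (c s)) (ζ (c s))) (Icc (-δ) δ) s‖)
          = fun t : ℝ => ∫ s in (-δ)..δ, ‖A s + t • B s‖ := by
        funext t
        apply intervalIntegral.integral_congr
        intro s hs
        rw [huIcc] at hs
        simp only [hdA s hs, hdB s hs]
      rw [heq] at h0
      exact h0
    set I : ℝ := ∫ s in (-δ)..δ, g s with hI_def
    -- integrability
    have hAcδ : ContinuousOn A (Icc (-δ) δ) := hAc.mono hIccsub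
    have hBcδ : ContinuousOn B (Icc (-δ) δ) := hBc.mono hIccsub
    have hgcδ : ContinuousOn g (Icc (-δ) δ) := hgc.mono hIccsub
    have hgint : IntervalIntegrable g MeasureTheory.volume (-δ) δ :=
      (hgcδ.mono (by rw [huIcc])).intervalIntegrable
    have hnint : ∀ t : ℝ, IntervalIntegrable (fun s => ‖A s + t • B s‖)
        MeasureTheory.volume (-δ) δ := by
      intro t
      apply ContinuousOn.intervalIntegrable
      rw [huIcc]
      exact (hAcδ.add (hBcδ.const_smul t)).norm
    -- convexity lower bound
    have hlow : ∀ t : ℝ, (∫ s in (-δ)..δ, ‖A s + (0:ℝ) • B s‖) + t * I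
        ≤ ∫ s in (-δ)..δ, ‖A s + t • B s‖ := by
      intro t
      have h1 : (∫ s in (-δ)..δ, ‖A s + (0:ℝ) • B s‖) + t * I
          = ∫ s in (-δ)..δ, (‖A s‖ + t * g s) := by
        rw [hI_def, ← intervalIntegral.integral_const_mul, ← intervalIntegral.integral_add]
        · apply intervalIntegral.integral_congr
          intro s hs
          simp
        · simpa using hnint 0
        · exact hgint.const_mul t
      rw [h1]
      apply intervalIntegral.integral_mono_on hlt.le _ (hnint t)
      · intro s hs
        have hAs := hAne s
        have hnA : (0:ℝ) < ‖A s‖ := norm_pos_iff.mpr hAs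
        have heq2 : ‖A s‖ + t * g s = ⟪‖A s‖⁻¹ • A s, A s + t • B s⟫ := by
          rw [inner_add_right, real_inner_smul_left, real_inner_smul_left,
            real_inner_smul_right, real_inner_self_eq_norm_mul_norm, hg_def]
          field_simp
        rw [heq2]
        calc ⟪‖A s‖⁻¹ • A s, A s + t • B s⟫
            ≤ ‖‖A s‖⁻¹ • A s‖ * ‖A s + t • B s‖ := real_inner_le_norm _ _
          _ = ‖A s + t • B s‖ := by
              rw [norm_smul, norm_inv, norm_norm, inv_mul_cancel₀ hnA.ne', one_mul]
      · apply ContinuousOn.intervalIntegrable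
        rw [huIcc]
        exact hAcδ.norm.add (continuousOn_const.mul hgcδ)
    -- local-minimum argument: I = 0
    have hG : HasDerivAt (fun t : ℝ => (∫ s in (-δ)..δ, ‖A s + t • B s‖) - t * I) (0 - I) 0 :=
      hF.sub (hasDerivAt_mul_const I)
    have hmin : IsLocalMin (fun t : ℝ => (∫ s in (-δ)..δ, ‖A s + t • B s‖) - t * I) 0 := by
      apply Filter.Eventually.of_forall
      intro t
      have h := hlow t
      simp only [zero_smul, add_zero, zero_mul, sub_zero] at h ⊢
      linarith
    have := hmin.hasDerivAt_eq_zero hG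
    linarith [this]
  -- g is continuous at 0, so g 0 = 0
  have h0mem : Icc (-δ0) δ0 ∈ nhds (0:ℝ) := Icc_mem_nhds (by linarith) hδ0
  have hgc0 : ContinuousAt g 0 := hgc.continuousAt h0mem
  have hg0 : g 0 = 0 := by
    by_contra hne
    have hpos : 0 < |g 0| / 2 := by positivity
    obtain ⟨δ', hδ'p, hδ'⟩ := Metric.continuousAt_iff.mp hgc0 (|g 0| / 2) hpos
    set δ : ℝ := min δ0 (δ' / 2) with hδdef
    have hδp : 0 < δ := lt_min hδ0 (by linarith)
    have hI0 := hint δ hδp (min_le_left _ _)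
    have hgintδ : IntervalIntegrable g MeasureTheory.volume (-δ) δ := by
      apply ContinuousOn.intervalIntegrable
      rw [uIcc_of_le (by linarith : -δ ≤ δ)]
      exact hgc.mono (Icc_subset_Icc (neg_le_neg (min_le_left _ _)) (min_le_left _ _))
    have hbound : ∀ x ∈ Set.uIoc (-δ) δ, ‖g x - g 0‖ ≤ |g 0| / 2 := by
      intro x hx
      rw [Set.uIoc_of_le (by linarith : -δ ≤ δ)] at hx
      have hxd : dist x 0 < δ' := by
        rw [Real.dist_eq, sub_zero]
        have h1 : |x| ≤ δ := abs_le.mpr ⟨hx.1.le, hx.2⟩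
        have h2 : δ ≤ δ' / 2 := min_le_right _ _
        linarith
      have h5 := hδ' hxd
      rw [Real.dist_eq] at h5
      rw [Real.norm_eq_abs]
      exact h5.le
    have h2 : (∫ s in (-δ)..δ, (g s - g 0)) = -(2 * δ * g 0) := by
      rw [intervalIntegral.integral_sub hgintδ intervalIntegrable_const, hI0,
        intervalIntegral.integral_const]
      simp only [smul_eq_mul, zero_sub, sub_neg_eq_add]
      ring
    have h3 := intervalIntegral.norm_integral_le_of_norm_le_const hbound
    rw [h2, Real.norm_eq_abs, abs_neg, abs_mul, abs_of_pos (by positivity : (0:ℝ) < 2 * δ),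
      show δ - -δ = 2 * δ by ring, abs_of_pos (by positivity : (0:ℝ) < 2 * δ)] at h3
    nlinarith [abs_pos.mpr hne]
  -- conclude
  have hfin : ⟪A 0, B 0⟫ = 0 := by
    have h := hg0
    simp only [hg_def] at h
    rcases div_eq_zero_iff.mp h with h' | h'
    · exact h'
    · exact absurd (norm_eq_zero.mp h') (hAne 0)
  simp only [hA_def, hB_def, hc0] at hfin
  rw [inner_vec3] at hfin
  exact hfin

/-- if (f,ξ,η,ζ) are C¹ on the open set D and the length of every
C¹ curve on the graph surface (with nonvanishing velocity) is stationary at t = 0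
under the deformation by v = (ξ,η,ζ), then the infinitesimal-flex equations
ξ_u = −f_u ζ_u, ξ_v + η_u = −f_v ζ_u − f_u ζ_v, η_v = −f_v ζ_v hold on D. -/
theorem stmt2 (D : Set (ℝ × ℝ)) (hD : IsOpen D)
    (f ξ η ζ : ℝ × ℝ → ℝ)
    (hf : ContDiffOn ℝ 1 f D) (hξ : ContDiffOn ℝ 1 ξ D)
    (hη : ContDiffOn ℝ 1 η D) (hζ : ContDiffOn ℝ 1 ζ D)
    (hstat : ∀ a b : ℝ, a < b → ∀ c : ℝ → ℝ × ℝ,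
      ContDiffOn ℝ 1 c (Set.Icc a b) →
      (∀ s ∈ Set.Icc a b, c s ∈ D) →
      (∀ s ∈ Set.Icc a b,
        derivWithin (fun s => vec3 (c s).1 (c s).2 (f (c s))) (Set.Icc a b) s ≠ 0) →
      HasDerivAt (fun t : ℝ => ∫ s in a..b,
        ‖derivWithin (fun s => vec3 (c s).1 (c s).2 (f (c s))) (Set.Icc a b) s
          + t • derivWithin (fun s => vec3 (ξ (c s)) (η (c s)) (ζ (c s)))
              (Set.Icc a b) s‖) 0 0) :
    ∀ z ∈ D, FlexEqns f ξ η ζ z := by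
  intro z hz
  have k := stmt2_key D hD f ξ η ζ hf hξ hη hζ hstat z hz
  have h10 := k (1, 0) (Or.inl one_ne_zero)
  have h01 := k (0, 1) (Or.inr one_ne_zero)
  have h11 := k (1, 1) (Or.inl one_ne_zero)
  have hsplit : ∀ g : ℝ × ℝ → ℝ, fderiv ℝ g z (1, 1)
      = fderiv ℝ g z (1, 0) + fderiv ℝ g z (0, 1) := by
    intro g
    have h : ((1, 1) : ℝ × ℝ) = (1, 0) + (0, 1) := by norm_num
    rw [h, map_add]
  rw [hsplit ξ, hsplit η, hsplit f, hsplit ζ] at h11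
  simp only [FlexEqns, pu, pv]
  refine ⟨by linear_combination h10, by linear_combination h11 - h10 - h01,
    by linear_combination h01⟩
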